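/- Let V_k be a finite vertex set with measure μ and graph Laplacian Δ_k, let g, h : V_k → ℝ with h ≤ 0, and let φ_k ≥ 0. If f : [0,∞) × V_k → ℝ solves the heat equation ∂_t f = Δ_k f + h e^f − g − φ_k f, then the function u = (∂_t f)² satisfies (Δ_k − ∂_t) u ≥ 0 pointwise. -/

import Mathlib

/-- If `f` solves the heat equation `∂_t f = Δ_k f + h e^f − g − φ_k f` with `h ≤ 0` and
`φ_k ≥ 0`, then `u = (∂_t f)²` satisfies `(Δ_k − ∂_t) u ≥ 0` pointwise on `[0,∞)`. -/
theorem heat_flow_time_derivative_subsolution {V : Type*} [Fintype V]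
    (μ : V → ℝ) (hμ : ∀ x, 0 < μ x)
    (Adj : V → V → Prop) [DecidableRel Adj] (hAdj : Symmetric Adj)
    (w : V → V → ℝ) (hwsymm : ∀ x y, w x y = w y x)
    (hwpos : ∀ x y, Adj x y → 0 < w x y)
    (Δ : (V → ℝ) → V → ℝ)
    (hΔ : ∀ u x, Δ u x =
      (1 / μ x) * ∑ y ∈ Finset.univ.filter (fun y => Adj x y), w x y * (u y - u x))
    (g h φ : V → ℝ) (hh : ∀ x, h x ≤ 0) (hφ : ∀ x, 0 ≤ φ x)
    (f f' f'' : ℝ → V → ℝ)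
    (hd1 : ∀ x t, HasDerivAt (fun s => f s x) (f' t x) t)
    (hd2 : ∀ x t, HasDerivAt (fun s => f' s x) (f'' t x) t)
    (hheat : ∀ t ∈ Set.Ici (0 : ℝ), ∀ x,
      f' t x = Δ (f t) x + h x * Real.exp (f t x) - g x - φ x * f t x) :
    ∀ t ∈ Set.Ici (0 : ℝ), ∀ x,
      0 ≤ Δ (fun y => (f' t y) ^ 2) x - 2 * f' t x * f'' t x := by
  intro t ht x
  -- Step 1: differentiate the heat equation on `Ici 0` to compute `f''`.
  have hR : ∀ z, f'' t z = Δ (fun y => f' t y) z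
      + h z * Real.exp (f t z) * f' t z - φ z * f' t z := by
    intro z
    have hG : HasDerivAt (fun s => Δ (f s) z + h z * Real.exp (f s z) - g z - φ z * f s z)
        (Δ (fun y => f' t y) z + h z * Real.exp (f t z) * f' t z - φ z * f' t z) t := by
      have hΔd : HasDerivAt (fun s => Δ (f s) z) (Δ (fun y => f' t y) z) t := by
        simp only [hΔ]
        exact (HasDerivAt.fun_sum fun y _ => ((hd1 y t).fun_sub (hd1 z t)).const_mul
          (w z y)).const_mul (1 / μ z)
      have he : HasDerivAt (fun s => h z * Real.exp (f s z))
          (h z * Real.exp (f t z) * f' t z) t := by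
        have h1 := ((Real.hasDerivAt_exp (f t z)).comp t (hd1 z t)).const_mul (h z)
        exact h1.congr_deriv (by ring)
      have hφd : HasDerivAt (fun s => φ z * f s z) (φ z * f' t z) t := (hd1 z t).const_mul _
      simpa using ((hΔd.fun_add he).fun_sub (hasDerivAt_const t (g z))).fun_sub hφd
    have h1 : HasDerivWithinAt (fun s => f' s z) (f'' t z) (Set.Ici (0:ℝ)) t :=
      (hd2 z t).hasDerivWithinAt
    have h2 : HasDerivWithinAt (fun s => f' s z)
        (Δ (fun y => f' t y) z + h z * Real.exp (f t z) * f' t z - φ z * f' t z)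
        (Set.Ici (0:ℝ)) t :=
      hG.hasDerivWithinAt.congr (fun s hs => hheat s hs z) (hheat t ht z)
    have hu : UniqueDiffWithinAt ℝ (Set.Ici (0:ℝ)) t := uniqueDiffOn_Ici 0 t ht
    rw [← h1.derivWithin hu, ← h2.derivWithin hu]
  -- Step 2: the "carré du champ" positivity: Δ((f')²) ≥ 2 f' Δ f'.
  set F := Finset.univ.filter (fun y => Adj x y) with hF
  have hS : ∑ y ∈ F, w x y * ((f' t y)^2 - (f' t x)^2)
      - 2 * f' t x * ∑ y ∈ F, w x y * (f' t y - f' t x)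
      = ∑ y ∈ F, w x y * (f' t y - f' t x)^2 := by
    rw [Finset.mul_sum, ← Finset.sum_sub_distrib]
    exact Finset.sum_congr rfl fun y _ => by ring
  have hSnn : 0 ≤ ∑ y ∈ F, w x y * (f' t y - f' t x)^2 :=
    Finset.sum_nonneg fun y hy =>
      mul_nonneg (hwpos x y (Finset.mem_filter.mp hy).2).le (sq_nonneg _)
  have hpos : 0 ≤ Δ (fun y => (f' t y)^2) x - 2 * f' t x * Δ (fun y => f' t y) x := by
    rw [hΔ, hΔ]
    have hrw : (1 / μ x) * (∑ y ∈ F, w x y * ((f' t y)^2 - (f' t x)^2))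
        - 2 * f' t x * ((1 / μ x) * ∑ y ∈ F, w x y * (f' t y - f' t x))
        = (1 / μ x) * (∑ y ∈ F, w x y * ((f' t y)^2 - (f' t x)^2)
          - 2 * f' t x * ∑ y ∈ F, w x y * (f' t y - f' t x)) := by ring
    rw [hrw, hS]
    exact mul_nonneg (one_div_nonneg.mpr (hμ x).le) hSnn
  -- Step 3: combine with the sign conditions.
  rw [hR x]
  have hsign : 0 ≤ 2 * (φ x - h x * Real.exp (f t x)) * (f' t x)^2 := by
    have h1 := mul_nonpos_of_nonpos_of_nonneg (hh x) (Real.exp_pos (f t x)).le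
    have h2 := hφ x
    exact mul_nonneg (by linarith) (sq_nonneg _)
  nlinarith [hpos, hsign]
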